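/- Let p be a prime and let S be a finite set of primes with p ∉ S. Then √p does not lie in the subfield of ℝ generated by the set {√q : q ∈ S}. -/

import Mathlib

open Real

/-- Elements of the subfield generated by `K` and `s`, where `s² ∈ K` and `s ∉ K`,
have the form `u + v * s` with `u, v ∈ K`. -/
lemma mem_closure_insert_sqrt (K : Subfield ℝ) (s : ℝ) (hs : s ∉ K) (hs2 : s * s ∈ K)
    (x : ℝ) (hx : x ∈ Subfield.closure (insert s (K : Set ℝ))) :
    ∃ u ∈ K, ∃ v ∈ K, x = u + v * s := by
  set L : Subfield ℝ :=
    { carrier := {x : ℝ | ∃ u ∈ K, ∃ v ∈ K, x = u + v * s}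
      one_mem' := ⟨1, one_mem K, 0, zero_mem K, by ring⟩
      zero_mem' := ⟨0, zero_mem K, 0, zero_mem K, by ring⟩
      add_mem' := by
        rintro a b ⟨u, hu, v, hv, rfl⟩ ⟨u', hu', v', hv', rfl⟩
        exact ⟨u + u', add_mem hu hu', v + v', add_mem hv hv', by ring⟩
      neg_mem' := by
        rintro a ⟨u, hu, v, hv, rfl⟩
        exact ⟨-u, neg_mem hu, -v, neg_mem hv, by ring⟩
      mul_mem' := by
        rintro a b ⟨u, hu, v, hv, rfl⟩ ⟨u', hu', v', hv', rfl⟩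
        exact ⟨u * u' + v * v' * (s * s), add_mem (mul_mem hu hu')
          (mul_mem (mul_mem hv hv') hs2),
          u * v' + u' * v, add_mem (mul_mem hu hv') (mul_mem hu' hv), by ring⟩
      inv_mem' := by
        rintro a ⟨u, hu, v, hv, rfl⟩
        rcases eq_or_ne (u + v * s) 0 with h0 | h0
        · exact ⟨0, zero_mem K, 0, zero_mem K, by rw [h0]; simp⟩
        · have hd : u * u - v * v * (s * s) ≠ 0 := by
            intro hd
            rcases eq_or_ne v 0 with hv0 | hv0
            · have hu2 : u * u = 0 := by rw [hv0] at hd; linarith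
              exact h0 (by rw [mul_self_eq_zero.mp hu2, hv0]; ring)
            · apply hs
              have h1 : (s - u / v) * (s + u / v) = 0 := by
                field_simp
                nlinarith
              rcases mul_eq_zero.mp h1 with h2 | h2
              · have : s = u / v := by linarith
                rw [this]; exact div_mem hu hv
              · have : s = -(u / v) := by linarith
                rw [this]; exact neg_mem (div_mem hu hv)
          refine ⟨u / (u * u - v * v * (s * s)), div_mem hu
            (sub_mem (mul_mem hu hu) (mul_mem (mul_mem hv hv) hs2)),
            -v / (u * u - v * v * (s * s)), div_mem (neg_mem hv)
            (sub_mem (mul_mem hu hu) (mul_mem (mul_mem hv hv) hs2)), ?_⟩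
          have hmul : (u + v * s) * (u / (u * u - v * v * (s * s)) +
              -v / (u * u - v * v * (s * s)) * s) = 1 := by
            rw [div_mul_eq_mul_div, ← add_div, mul_div_assoc', div_eq_one_iff_eq hd]
            ring
          exact (eq_inv_of_mul_eq_one_right hmul).symm }
  have hle : Subfield.closure (insert s (K : Set ℝ)) ≤ L := by
    apply Subfield.closure_le.mpr
    rintro x (rfl | hxK)
    · exact ⟨0, zero_mem K, 1, one_mem K, by ring⟩
    · exact ⟨x, hxK, 0, zero_mem K, by ring⟩
  exact hle hx

/-- Key quadratic extension step. -/
lemma key_step (K : Subfield ℝ) (a b : ℝ) (ha : 0 ≤ a) (hb : 0 ≤ b)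
    (haK : a ∈ K) (hbK : b ∈ K) (hsb : Real.sqrt b ∉ K)
    (h : Real.sqrt a ∈ Subfield.closure (insert (Real.sqrt b) (K : Set ℝ))) :
    Real.sqrt a ∈ K ∨ Real.sqrt (a * b) ∈ K := by
  have hbb : Real.sqrt b * Real.sqrt b = b := Real.mul_self_sqrt hb
  obtain ⟨u, hu, v, hv, huv⟩ := mem_closure_insert_sqrt K (Real.sqrt b) hsb
    (by rw [hbb]; exact hbK) _ h
  rcases eq_or_ne v 0 with hv0 | hv0
  · left; rw [huv, hv0]; simpa using hu
  rcases eq_or_ne u 0 with hu0 | hu0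
  · right
    have : Real.sqrt (a * b) = v * b := by
      rw [Real.sqrt_mul ha, huv, hu0, zero_add, mul_assoc, hbb]
    rw [this]
    exact mul_mem hv hbK
  · -- both nonzero: derive √b ∈ K, contradiction
    exfalso
    apply hsb
    have hsq : a = u * u + v * v * b + 2 * (u * v) * Real.sqrt b := by
      have := Real.mul_self_sqrt ha
      rw [huv] at this
      nlinarith [this, hbb]
    have : Real.sqrt b = (a - u * u - v * v * b) / (2 * (u * v)) := by
      field_simp
      linarith [hsq]
    rw [this]
    exact div_mem (sub_mem (sub_mem haK (mul_mem hu hu))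
      (mul_mem (mul_mem hv hv) hbK))
      (mul_mem (by exact_mod_cast natCast_mem K 2) (mul_mem hu hv))

lemma sqrt_not_mem (S : Finset ℕ) (hS : ∀ q ∈ S, Nat.Prime q) :
    ∀ n : ℕ, Squarefree n → (∃ p, Nat.Prime p ∧ p ∣ n ∧ p ∉ S) →
      Real.sqrt n ∉ Subfield.closure {x : ℝ | ∃ q ∈ S, x = Real.sqrt q} := by
  induction S using Finset.induction with
  | empty =>
    intro n hn ⟨p, hp, hpn, _⟩ hmem
    have hset : {x : ℝ | ∃ q ∈ (∅ : Finset ℕ), x = Real.sqrt q} = (∅ : Set ℝ) := by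
      simp
    rw [hset, Subfield.closure_empty] at hmem
    have hirr : Irrational (Real.sqrt n) := by
      rw [irrational_sqrt_natCast_iff]
      rintro ⟨k, hk⟩
      have hk1 : IsUnit k := hn k (hk ▸ dvd_refl _)
      rw [Nat.isUnit_iff.mp hk1] at hk
      exact hp.ne_one (Nat.dvd_one.mp (by rwa [hk, one_mul] at hpn))
    have hle : (⊥ : Subfield ℝ) ≤ (Rat.castHom ℝ).fieldRange := bot_le
    obtain ⟨q, hq⟩ := hle hmem
    exact hirr ⟨q, hq⟩
  | @insert q S' hq IH =>
    intro n hn ⟨p, hp, hpn, hpS⟩ hmem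
    have hq' : Nat.Prime q := hS q (Finset.mem_insert_self q S')
    have hS' : ∀ r ∈ S', Nat.Prime r := fun r hr => hS r (Finset.mem_insert_of_mem hr)
    set K : Subfield ℝ := Subfield.closure {x : ℝ | ∃ r ∈ S', x = Real.sqrt r} with hK
    have hsqK : Real.sqrt q ∉ K :=
      IH hS' q hq'.squarefree ⟨q, hq', dvd_refl q, hq⟩
    -- the closure over insert q S' is ≤ closure (insert (√q) K)
    have hle : Subfield.closure {x : ℝ | ∃ r ∈ insert q S', x = Real.sqrt r} ≤
        Subfield.closure (insert (Real.sqrt q) (K : Set ℝ)) := by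
      apply Subfield.closure_le.mpr
      rintro x ⟨r, hr, rfl⟩
      rcases Finset.mem_insert.mp hr with rfl | hr'
      · exact Subfield.subset_closure (Set.mem_insert _ _)
      · exact Subfield.subset_closure (Set.mem_insert_of_mem _
          (Subfield.subset_closure ⟨r, hr', rfl⟩))
    have hmem' := hle hmem
    have hcase := key_step K (n : ℝ) (q : ℝ) (by positivity) (by positivity)
      (natCast_mem K n) (natCast_mem K q) hsqK hmem'
    have hpS' : p ∉ S' := fun h => hpS (Finset.mem_insert_of_mem h)
    rcases hcase with h1 | h2
    · exact IH hS' n hn ⟨p, hp, hpn, hpS'⟩ h1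
    · rcases em (q ∣ n) with hqn | hqn
      · obtain ⟨m, rfl⟩ := hqn
        have hm : Squarefree m := hn.squarefree_of_dvd (dvd_mul_left m q)
        have hq0 : (0:ℝ) < q := by exact_mod_cast hq'.pos
        have : Real.sqrt ((q * m : ℕ) * (q : ℕ)) = q * Real.sqrt m := by
          push_cast
          rw [show (q:ℝ) * m * q = (q:ℝ)^2 * m by ring, Real.sqrt_mul (by positivity),
            Real.sqrt_sq hq0.le]
        rw [this] at h2
        have hsm : Real.sqrt m ∈ K := by
          have := div_mem h2 (natCast_mem K q)
          rwa [mul_div_cancel_left₀ _ (by exact_mod_cast hq'.ne_zero : (q:ℝ) ≠ 0)] at this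
        have hpm : p ∣ m := by
          have hpq : p ≠ q := fun h => hpS (h ▸ Finset.mem_insert_self q S')
          rcases (Nat.Prime.dvd_mul hp).mp hpn with h | h
          · exact absurd ((Nat.prime_dvd_prime_iff_eq hp hq').mp h) hpq
          · exact h
        exact IH hS' m hm ⟨p, hp, hpm, hpS'⟩ hsm
      · have hcop : Nat.Coprime n q := ((Nat.Prime.coprime_iff_not_dvd hq').mpr hqn).symm
        have hnq : Squarefree (n * q) := (Nat.squarefree_mul hcop).mpr ⟨hn, hq'.squarefree⟩
        have h2' : Real.sqrt ((n * q : ℕ) : ℝ) ∈ K := by push_cast; exact h2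
        exact IH hS' (n * q) hnq ⟨p, hp, Dvd.dvd.mul_right hpn q, hpS'⟩ h2'
/-- for a prime p and a finite set S of primes with p ∉ S, √p does not lie
in the subfield of ℝ generated by {√q : q ∈ S}. -/
theorem stmt_6 (p : ℕ) (hp : p.Prime) (S : Finset ℕ) (hS : ∀ q ∈ S, Nat.Prime q)
    (hpS : p ∉ S) :
    Real.sqrt p ∉ Subfield.closure {x : ℝ | ∃ q ∈ S, x = Real.sqrt q} :=
  sqrt_not_mem S hS p hp.squarefree ⟨p, hp, dvd_refl p, hpS⟩
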